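/- Suppose the divisible P-category F fulfills the Alperin condition. Then for every proper subgroup Q of P and every φ ∈ F(P,Q) there exist σ ∈ F(Q), a finite set I and, for each i ∈ I, a subgroup U_i of P with |U_i| > |Q|, an automorphism τ_i ∈ F(U_i) and a morphism ν_i ∈ F(U_i,Q), such that φ − ι_Q^P∘σ = Σ_{i∈I} ι_{U_i}^P∘(τ_i − id_{U_i})∘ν_i in ℤF(P,Q). -/

import Mathlib

namespace Puig

variable {G : Type*} [Group G]

/-- The conjugation morphism `x ↦ u x u⁻¹` from `R` to `Q`. -/
def conjMap {Q R : Subgroup G} (u : G) (h : ∀ x ∈ R, u * x * u⁻¹ ∈ Q) : ↥R →* ↥Q where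
  toFun x := ⟨u * x * u⁻¹, h x x.2⟩
  map_one' := by ext; simp
  map_mul' x y := by ext; simp

/-- The data of a `P`-category: a set of morphisms for each pair of subgroups. -/
structure PCat (G : Type*) [Group G] where
  Hom : ∀ _Q _R : Subgroup G, Set (↥_R →* ↥_Q)

/-- `F` is a divisible `P`-category. -/
structure PCat.IsDivisible (F : PCat G) : Prop where
  inj : ∀ ⦃Q R : Subgroup G⦄ ⦃φ : ↥R →* ↥Q⦄, φ ∈ F.Hom Q R → Function.Injective φ
  conj_mem : ∀ ⦃Q R : Subgroup G⦄ (u : G) (h : ∀ x ∈ R, u * x * u⁻¹ ∈ Q),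
    conjMap u h ∈ F.Hom Q R
  comp_mem : ∀ ⦃Q R T : Subgroup G⦄ ⦃φ : ↥R →* ↥Q⦄ ⦃ψ : ↥T →* ↥R⦄,
    φ ∈ F.Hom Q R → ψ ∈ F.Hom R T → φ.comp ψ ∈ F.Hom Q T
  div : ∀ ⦃Q R T : Subgroup G⦄ ⦃φ : ↥R →* ↥Q⦄ (ψ : ↥T →* ↥R), φ ∈ F.Hom Q R →
    (φ.comp ψ ∈ F.Hom Q T ↔ ψ ∈ F.Hom R T)

/-- The image `φ(Q) ≤ G` of a morphism `φ : Q → R` between subgroups of `G`. -/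
def img {Q R : Subgroup G} (φ : ↥Q →* ↥R) : Subgroup G := φ.range.map R.subtype

/-- The corestriction `Q → φ(Q)` of a morphism `φ`. -/
def toImg {Q R : Subgroup G} (φ : ↥Q →* ↥R) : ↥Q →* ↥(img φ) where
  toFun x := ⟨(φ x : G), Subgroup.mem_map_of_mem R.subtype ⟨x, rfl⟩⟩
  map_one' := by ext; simp
  map_mul' x y := by ext; simp

/-- Restriction of a morphism along an inclusion of subgroups. -/
def restrHom {A B C : Subgroup G} (ψ : ↥A →* ↥C) (h : B ≤ A) : ↥B →* ↥C :=
  ψ.comp (Subgroup.inclusion h)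

/-- The inclusion morphism `ι_A^P : A → P`. -/
def inclP (A : Subgroup G) : ↥A →* ↥(⊤ : Subgroup G) := Subgroup.inclusion le_top

/-- The automorphism of `Q` induced by conjugation by `u ∈ N_G(Q)`. -/
def conjAut (Q : Subgroup G) (u : ↥(Subgroup.normalizer (Q : Set G))) : MulAut ↥Q where
  toFun x := ⟨(u : G) * x * (u : G)⁻¹, (Subgroup.mem_normalizer_iff.mp u.2 x).mp x.2⟩
  invFun x := ⟨(u : G)⁻¹ * x * (u : G),
    (Subgroup.mem_normalizer_iff.mp u.2 ((u : G)⁻¹ * x * (u : G))).mpr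
      (by simpa [mul_assoc] using x.2)⟩
  left_inv x := by ext; simp [mul_assoc]
  right_inv x := by ext; simp [mul_assoc]
  map_mul' x y := by ext; simp

/-- The homomorphism `N_G(Q) → Aut(Q)` given by conjugation. -/
def conjHomN (Q : Subgroup G) : ↥(Subgroup.normalizer (Q : Set G)) →* MulAut ↥Q where
  toFun := conjAut Q
  map_one' := by ext x; simp [conjAut]
  map_mul' u v := by ext x; simp [conjAut, mul_assoc]

/-- `F_R(Q)`: the group of automorphisms of `Q` induced by conjugation by elements of `R`. -/
def conjF (R Q : Subgroup G) : Subgroup (MulAut ↥Q) :=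
  (R.subgroupOf (Subgroup.normalizer (Q : Set G))).map (conjHomN Q)

/-- `F(Q)`: the group of `F`-automorphisms of `Q`. -/
def FAut (F : PCat G) (Q : Subgroup G) : Subgroup (MulAut ↥Q) :=
  Subgroup.closure {α : MulAut ↥Q | α.toMonoidHom ∈ F.Hom Q Q}

/-- `O_p(G)`: the largest normal `p`-subgroup of `G`. -/
def pCore (p : ℕ) (G : Type*) [Group G] : Subgroup G :=
  sSup {H : Subgroup G | H.Normal ∧ IsPGroup p ↥H}

/-- `N_P^K(Q)`. -/
def NPK (Q : Subgroup G) (K : Subgroup (MulAut ↥Q)) : Subgroup G :=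
  (K.comap (conjHomN Q)).map (Subgroup.normalizer (Q : Set G)).subtype

/-- `^φK`: the image of `K ≤ Aut Q` in `Aut (φ(Q))` under the isomorphism induced by `φ`. -/
def pushK {Q R : Subgroup G} (φ : ↥Q →* ↥R) (K : Subgroup (MulAut ↥Q)) :
    Subgroup (MulAut ↥(img φ)) :=
  Subgroup.closure {β | ∃ α ∈ K, ∀ x : ↥Q, β (toImg φ x) = toImg φ (α x)}

/-- `φ*K'`: the pull-back of `K' ≤ Aut (φ(Q))` to `Aut Q` under the isomorphism induced by `φ`. -/
def pullK {Q R : Subgroup G} (φ : ↥Q →* ↥R) (K' : Subgroup (MulAut ↥(img φ))) :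
    Subgroup (MulAut ↥Q) :=
  Subgroup.closure {α | ∃ β ∈ K', ∀ x : ↥Q, toImg φ (α x) = β (toImg φ x)}

/-- `Q` is fully `K`-normalized in `F`. -/
def FullyKNormalized (F : PCat G) (Q : Subgroup G) (K : Subgroup (MulAut ↥Q)) : Prop :=
  ∀ ψ ∈ F.Hom ⊤ (Q ⊔ NPK Q K),
    img (restrHom ψ le_sup_right) =
      NPK (img (restrHom ψ le_sup_left)) (pushK (restrHom ψ le_sup_left) K)

/-- The triple `(Q, K, φ)` is extensile in `F`. -/
def Extensile (F : PCat G) (Q : Subgroup G) (K : Subgroup (MulAut ↥Q))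
    (φ : ↥Q →* ↥(⊤ : Subgroup G)) : Prop :=
  ∃ ψ ∈ F.Hom ⊤ (Q ⊔ NPK Q K), ∃ χ : MulAut ↥Q, χ ∈ K ∧ χ.toMonoidHom ∈ F.Hom Q Q ∧
    ∀ u : ↥Q, restrHom ψ le_sup_left u = φ (χ u)

/-- The Sylow condition: `F_P(P)` is a Sylow `p`-subgroup of `F(P)`. -/
def SylowCond (p : ℕ) (F : PCat G) : Prop :=
  ∃ S : Sylow p ↥(FAut F (⊤ : Subgroup G)),
    (S : Subgroup ↥(FAut F (⊤ : Subgroup G))) =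
      (conjF (⊤ : Subgroup G) (⊤ : Subgroup G)).subgroupOf (FAut F (⊤ : Subgroup G))

/-- The extension condition for a Frobenius `P`-category. -/
def ExtensionCond (F : PCat G) : Prop :=
  ∀ (Q : Subgroup G) (K : Subgroup (MulAut ↥Q)) (φ : ↥Q →* ↥(⊤ : Subgroup G)),
    φ ∈ F.Hom ⊤ Q → FullyKNormalized F (img φ) (pushK φ K) → Extensile F Q K φ

/-- `F` is a Frobenius `P`-category. -/
def IsFrobenius (p : ℕ) (F : PCat G) : Prop :=
  F.IsDivisible ∧ SylowCond p F ∧ ExtensionCond F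

/-- The free ℤ-module on all morphisms from `R` to `Q`. -/
abbrev Zmod (Q R : Subgroup G) : Type _ := (↥R →* ↥Q) →₀ ℤ

/-- Bilinear composition on the free ℤ-modules of morphisms. -/
noncomputable def dcomp {Q R T : Subgroup G} (a : Zmod Q R) (b : Zmod R T) : Zmod Q T :=
  a.sum fun φ m => b.sum fun ψ n => Finsupp.single (φ.comp ψ) (m * n)

/-- `ℤF(Q,R)`: the free ℤ-module with basis `F(Q,R)`. -/
noncomputable def ZF (F : PCat G) (Q R : Subgroup G) : Submodule ℤ (Zmod Q R) :=
  Finsupp.supported ℤ ℤ (F.Hom Q R)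

/-- `w_F(Q)`: the kernel of the augmentation `ℤF(P,Q) → ℤ`. -/
noncomputable def wF (F : PCat G) (Q : Subgroup G) : Submodule ℤ (Zmod (⊤ : Subgroup G) Q) :=
  ZF F ⊤ Q ⊓ LinearMap.ker (Finsupp.linearCombination ℤ fun _ => (1 : ℤ))

/-- `r_F(Q) = w_F(P)∘ℤF(P,Q) + Σ_{|R|>|Q|} w_F(R)∘ℤF(R,Q)`. -/
noncomputable def rF (F : PCat G) (Q : Subgroup G) : Submodule ℤ (Zmod (⊤ : Subgroup G) Q) :=
  Submodule.span ℤ {x | ∃ R : Subgroup G, (R = ⊤ ∨ Nat.card ↥Q < Nat.card ↥R) ∧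
    ∃ a ∈ wF F R, ∃ b ∈ ZF F R Q, x = dcomp a b}

/-- `Q` is `F`-essential. -/
def IsEssential (F : PCat G) (Q : Subgroup G) : Prop := rF F Q ≠ wF F Q

/-- `Q` is `F`-selfcentralizing. -/
def SelfCentralizing (F : PCat G) (Q : Subgroup G) : Prop :=
  ∀ φ ∈ F.Hom (⊤ : Subgroup G) Q,
    Subgroup.centralizer (img φ : Set G) = (Subgroup.center ↥(img φ)).map (img φ).subtype

/-- `Q` is `F`-radical. -/
def Radical (p : ℕ) (F : PCat G) (Q : Subgroup G) : Prop :=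
  SelfCentralizing F Q ∧ (pCore p ↥(FAut F Q)).map (FAut F Q).subtype = conjF Q Q

/-- `Q` is `F`-intersected. -/
def Intersected (F : PCat G) (Q : Subgroup G) : Prop :=
  SelfCentralizing F Q ∧
    conjF Q Q = ⨅ φ : ↥(F.Hom (⊤ : Subgroup G) Q), pullK φ.1 (conjF ⊤ (img φ.1))

/-- The Alperin condition on `F`. -/
def AlperinCond (p : ℕ) (F : PCat G) : Prop :=
  ∀ Q : Subgroup G, IsEssential F Q → Radical p F Q ∧
    ∀ φ ∈ F.Hom (⊤ : Subgroup G) Q, ∀ φ' ∈ F.Hom (⊤ : Subgroup G) Q,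
      ∃ σ ∈ F.Hom Q Q,
        Finsupp.single φ' (1 : ℤ) - Finsupp.single (φ.comp σ) 1 ∈ rF F Q

/-- The subgroup of `G` corresponding to a subgroup of a subgroup `N ≤ G`. -/
def liftSub {N : Subgroup G} (A : Subgroup ↥N) : Subgroup G := A.map N.subtype

/-- The category `N_F^K(Q)` over the group `N_P^K(Q)`. -/
def NFK (F : PCat G) (Q : Subgroup G) (K : Subgroup (MulAut ↥Q)) : PCat ↥(NPK Q K) where
  Hom A B := {φ : ↥B →* ↥A | ∃ ψ ∈ F.Hom (Q ⊔ liftSub A) (Q ⊔ liftSub B), ∃ χ ∈ K,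
    (∀ (x : G) (hxQ : x ∈ Q) (hx : x ∈ Q ⊔ liftSub B),
      ((ψ ⟨x, hx⟩ : ↥(Q ⊔ liftSub A)) : G) = ((χ ⟨x, hxQ⟩ : ↥Q) : G)) ∧
    (∀ (y : ↥B) (hy : ((y : ↥(NPK Q K)) : G) ∈ Q ⊔ liftSub B),
      ((ψ ⟨((y : ↥(NPK Q K)) : G), hy⟩ : ↥(Q ⊔ liftSub A)) : G) =
        (((φ y : ↥A) : ↥(NPK Q K)) : G))}

/-- A generator family for `w_F`. -/
def GenFamily (F : PCat G) (S : ∀ Q : Subgroup G, Set (Zmod (⊤ : Subgroup G) Q)) : Prop :=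
  (∀ Q : Subgroup G, Q ≠ ⊤ → S Q ⊆ (wF F Q : Set (Zmod (⊤ : Subgroup G) Q))) ∧
  ∀ Q : Subgroup G, Q ≠ ⊤ →
    wF F Q = Submodule.span ℤ {x | ∃ R : Subgroup G, R ≠ ⊤ ∧
      ∃ a ∈ S R, ∃ φ ∈ F.Hom R Q, x = dcomp a (Finsupp.single φ (1 : ℤ))}

/-- `F^𝔛` is a partial Frobenius `P`-category. -/
def PartialFrobenius (p : ℕ) (F : PCat G) (X : Set (Subgroup G)) : Prop :=
  SylowCond p F ∧ ∀ Q ∈ X, ∀ (K : Subgroup (MulAut ↥Q)) (φ : ↥Q →* ↥(⊤ : Subgroup G)),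
    φ ∈ F.Hom ⊤ Q → FullyKNormalized F (img φ) (pushK φ K) → Extensile F Q K φ

/-- The closure condition on the set of subgroups `𝔛`. -/
def XClosed (F : PCat G) (X : Set (Subgroup G)) : Prop :=
  X.Nonempty ∧ ∀ Q : Subgroup G, (∃ R ∈ X, (F.Hom Q R).Nonempty) → Q ∈ X


/-! ### Auxiliary material for 3.4.2 -/

section Aux

theorem dcomp_single_single {Q R T : Subgroup G} (f : ↥R →* ↥Q) (g : ↥T →* ↥R) (m n : ℤ) :
    dcomp (Finsupp.single f m) (Finsupp.single g n) = Finsupp.single (f.comp g) (m * n) := by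
  unfold dcomp
  rw [Finsupp.sum_single_index (by simp [Finsupp.sum_single_index]),
    Finsupp.sum_single_index (by simp)]

/-- Right composition as a linear map. -/
noncomputable def rcompL {Q R T : Subgroup G} (b : Zmod R T) : Zmod Q R →ₗ[ℤ] Zmod Q T :=
  Finsupp.linearCombination ℤ fun φ => Finsupp.mapDomain (fun ψ => φ.comp ψ) b

theorem dcomp_eq_rcompL {Q R T : Subgroup G} (a : Zmod Q R) (b : Zmod R T) :
    dcomp a b = rcompL b a := by
  rw [rcompL, Finsupp.linearCombination_apply]
  refine Finsupp.sum_congr fun φ _ => ?_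
  rw [Finsupp.mapDomain, Finsupp.smul_sum]
  exact Finsupp.sum_congr fun ψ _ => by rw [Finsupp.smul_single, smul_eq_mul]

/-- Left composition as a linear map. -/
noncomputable def lcompL {Q R T : Subgroup G} (a : Zmod Q R) : Zmod R T →ₗ[ℤ] Zmod Q T :=
  Finsupp.linearCombination ℤ fun ψ => dcomp a (Finsupp.single ψ 1)

theorem dcomp_eq_lcompL {Q R T : Subgroup G} (a : Zmod Q R) (b : Zmod R T) :
    dcomp a b = lcompL a b := by
  rw [lcompL, Finsupp.linearCombination_apply]
  unfold dcomp
  rw [Finsupp.sum_comm]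
  refine Finsupp.sum_congr fun ψ _ => ?_
  rw [Finsupp.smul_sum]
  refine Finsupp.sum_congr fun φ _ => ?_
  rw [Finsupp.sum_single_index (by simp), Finsupp.smul_single, smul_eq_mul]
  ring_nf

theorem dcomp_sub_left {Q R T : Subgroup G} (a a' : Zmod Q R) (b : Zmod R T) :
    dcomp (a - a') b = dcomp a b - dcomp a' b := by
  rw [dcomp_eq_rcompL, dcomp_eq_rcompL, dcomp_eq_rcompL, map_sub]

theorem dcomp_sub_right {Q R T : Subgroup G} (a : Zmod Q R) (b b' : Zmod R T) :
    dcomp a (b - b') = dcomp a b - dcomp a b' := by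
  rw [dcomp_eq_lcompL, dcomp_eq_lcompL, dcomp_eq_lcompL, map_sub]

theorem PCat.IsDivisible.incl_mem {F : PCat G} (hF : F.IsDivisible) {Q R : Subgroup G}
    (h : Q ≤ R) : Subgroup.inclusion h ∈ F.Hom R Q := by
  have h1 : ∀ x ∈ Q, (1 : G) * x * 1⁻¹ ∈ R := fun x hx => by simpa using h hx
  have he : conjMap 1 h1 = Subgroup.inclusion h := by
    ext x
    simp [conjMap]
  rw [← he]
  exact hF.conj_mem 1 h1

theorem PCat.IsDivisible.id_mem {F : PCat G} (hF : F.IsDivisible) {Q : Subgroup G} :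
    MonoidHom.id ↥Q ∈ F.Hom Q Q := by
  have he : Subgroup.inclusion (le_refl Q) = MonoidHom.id ↥Q := by
    ext x
    simp
  rw [← he]
  exact hF.incl_mem le_rfl

theorem PCat.IsDivisible.inclP_mem {F : PCat G} (hF : F.IsDivisible) (Q : Subgroup G) :
    inclP Q ∈ F.Hom ⊤ Q :=
  hF.incl_mem le_top

theorem inclP_top : inclP (⊤ : Subgroup G) = MonoidHom.id ↥(⊤ : Subgroup G) := by
  ext x
  simp [inclP]

theorem PCat.IsDivisible.exists_inv {F : PCat G} (hF : F.IsDivisible) {R : Subgroup G}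
    [Finite ↥R] {τ : ↥R →* ↥R} (hτ : τ ∈ F.Hom R R) :
    ∃ τ' ∈ F.Hom R R, τ'.comp τ = MonoidHom.id ↥R ∧ τ.comp τ' = MonoidHom.id ↥R := by
  have hbij : Function.Bijective τ := Finite.injective_iff_bijective.mp (hF.inj hτ)
  let e := MulEquiv.ofBijective τ hbij
  have hcomp : τ.comp e.symm.toMonoidHom = MonoidHom.id ↥R := by
    ext x
    exact congrArg Subtype.val (e.apply_symm_apply x)
  refine ⟨e.symm.toMonoidHom, ?_, ?_, hcomp⟩
  · exact (hF.div _ hτ).mp (by rw [hcomp]; exact hF.id_mem)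
  · ext x
    exact congrArg Subtype.val (e.symm_apply_apply x)

/-- The augmentation ideal is spanned by differences. -/
theorem wF_le_span (F : PCat G) (R : Subgroup G) :
    wF F R ≤ Submodule.span ℤ
      {x : Zmod (⊤ : Subgroup G) R | ∃ ψ ∈ F.Hom (⊤ : Subgroup G) R,
        x = Finsupp.single ψ 1 - Finsupp.single (inclP R) 1} := by
  intro a ha
  obtain ⟨ha1, ha2⟩ := Submodule.mem_inf.mp ha
  rw [LinearMap.mem_ker] at ha2
  set ε : Zmod (⊤ : Subgroup G) R →ₗ[ℤ] ℤ :=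
    Finsupp.linearCombination ℤ fun _ => (1 : ℤ) with hε
  set π : Zmod (⊤ : Subgroup G) R →ₗ[ℤ] Zmod (⊤ : Subgroup G) R :=
    LinearMap.id - ε.smulRight (Finsupp.single (inclP R) 1) with hπ
  have hπa : π a = a := by
    simp [hπ, LinearMap.sub_apply, LinearMap.smulRight_apply, ha2]
  have ha1' : a ∈ Submodule.span ℤ
      ((fun ψ => Finsupp.single ψ (1 : ℤ)) '' F.Hom (⊤ : Subgroup G) R) := by
    rw [← Finsupp.supported_eq_span_single]
    exact ha1
  have hmap := Submodule.mem_map_of_mem (f := π) ha1'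
  rw [Submodule.map_span] at hmap
  rw [← hπa]
  refine Submodule.span_le.mpr ?_ hmap
  rintro y ⟨_, ⟨ψ, hψ, rfl⟩, rfl⟩
  apply Submodule.subset_span
  refine ⟨ψ, hψ, ?_⟩
  simp [hπ, LinearMap.sub_apply, LinearMap.smulRight_apply, hε,
    Finsupp.linearCombination_single]

theorem card_lt_of_lt {P : Type*} [Group P] [Finite P] {Q R : Subgroup P} (h : Q < R) :
    Nat.card ↥Q < Nat.card ↥R := by
  have e1 : Nat.card ↥Q = (Q : Set P).ncard := by
    rw [← SetLike.coe_sort_coe]; exact Nat.card_coe_set_eq _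
  have e2 : Nat.card ↥R = (R : Set P).ncard := by
    rw [← SetLike.coe_sort_coe]; exact Nat.card_coe_set_eq _
  rw [e1, e2]
  exact Set.ncard_lt_ncard (SetLike.coe_ssubset_coe.mpr h) (Set.toFinite _)

theorem card_lt_top {P : Type*} [Group P] [Finite P] {Q : Subgroup P} (h : Q ≠ ⊤) :
    Nat.card ↥Q < Nat.card P := by
  have := card_lt_of_lt (h.lt_top)
  rwa [Nat.card_congr Subgroup.topEquiv.toEquiv] at this

/-- Sums over symmetric generating sets. -/
theorem sum_rep {M : Type*} [AddCommGroup M] {S : Set M} (hneg : ∀ x ∈ S, -x ∈ S)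
    {x : M} (hx : x ∈ Submodule.span ℤ S) :
    ∃ (n : ℕ) (f : Fin n → M), (∀ i, f i ∈ S) ∧ x = ∑ i, f i := by
  classical
  let T : AddSubgroup M :=
    { carrier := {x | ∃ (n : ℕ) (f : Fin n → M), (∀ i, f i ∈ S) ∧ x = ∑ i, f i}
      zero_mem' := ⟨0, fun i => i.elim0, fun i => i.elim0, by simp⟩
      add_mem' := by
        rintro y z ⟨n, f, hf, rfl⟩ ⟨m, g, hg, rfl⟩
        refine ⟨n + m, Fin.append f g, ?_, ?_⟩
        · intro i
          refine Fin.addCases (fun j => ?_) (fun j => ?_) i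
          · rw [Fin.append_left]; exact hf j
          · rw [Fin.append_right]; exact hg j
        · rw [Fin.sum_univ_add]
          simp [Fin.append_left, Fin.append_right]
      neg_mem' := by
        rintro y ⟨n, f, hf, rfl⟩
        exact ⟨n, fun i => -f i, fun i => hneg _ (hf i), by simp⟩ }
  have hle : Submodule.span ℤ S ≤ AddSubgroup.toIntSubmodule T :=
    Submodule.span_le.mpr fun s hs =>
      ⟨1, fun _ => s, fun _ => hs, by simp⟩
  exact hle hx

variable {P : Type*} [Group P] [Finite P]

/-- The set of dimorphism generators with `|U| > |Q|`. -/
def genSet (F : PCat P) (Q : Subgroup P) : Set (Zmod (⊤ : Subgroup P) Q) :=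
  {x | ∃ (U : Subgroup P) (τ : ↥U →* ↥U) (ν : ↥Q →* ↥U),
    Nat.card ↥Q < Nat.card ↥U ∧ τ ∈ F.Hom U U ∧ ν ∈ F.Hom U Q ∧
    x = dcomp (Finsupp.single (inclP U) (1 : ℤ))
      (dcomp (Finsupp.single τ (1 : ℤ) - Finsupp.single (MonoidHom.id ↥U) 1)
        (Finsupp.single ν (1 : ℤ)))}

theorem gen_expr {Q U : Subgroup P} (τ : ↥U →* ↥U) (ν : ↥Q →* ↥U) :
    dcomp (Finsupp.single (inclP U) (1 : ℤ))
      (dcomp (Finsupp.single τ (1 : ℤ) - Finsupp.single (MonoidHom.id ↥U) 1)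
        (Finsupp.single ν (1 : ℤ))) =
    Finsupp.single ((inclP U).comp (τ.comp ν)) 1 -
      Finsupp.single ((inclP U).comp ν) 1 := by
  rw [dcomp_sub_left, dcomp_single_single, dcomp_single_single, MonoidHom.id_comp,
    dcomp_sub_right, dcomp_single_single, dcomp_single_single]
  simp only [one_mul, mul_one]

/-- The key induction. -/
theorem key_induction (p : ℕ) [Fact p.Prime] (F : PCat P) (hF : F.IsDivisible)
    (hA : AlperinCond p F) :
    ∀ (k : ℕ) (Q : Subgroup P), Q ≠ ⊤ → Nat.card P - Nat.card ↥Q ≤ k →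
      ∀ φ ∈ F.Hom (⊤ : Subgroup P) Q, ∃ σ ∈ F.Hom Q Q,
        Finsupp.single φ (1 : ℤ) - Finsupp.single ((inclP Q).comp σ) 1 ∈
          Submodule.span ℤ (genSet F Q) := by
  intro k
  induction k with
  | zero =>
    intro Q hQ hk
    exact absurd hk (by have := card_lt_top (P := P) hQ; omega)
  | succ k IH =>
    intro Q hQ hk φ hφ
    have hιQ : inclP Q ∈ F.Hom ⊤ Q := hF.inclP_mem Q
    -- Step A: reduce to `rF F Q`.
    have hstep : ∃ σ ∈ F.Hom Q Q,
        Finsupp.single φ (1 : ℤ) - Finsupp.single ((inclP Q).comp σ) 1 ∈ rF F Q := by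
      by_cases hess : IsEssential F Q
      · obtain ⟨_, h2⟩ := hA Q hess
        obtain ⟨σ, hσ, hmem⟩ := h2 (inclP Q) hιQ φ hφ
        exact ⟨σ, hσ, hmem⟩
      · rw [IsEssential, not_ne_iff] at hess
        refine ⟨MonoidHom.id ↥Q, hF.id_mem, ?_⟩
        rw [MonoidHom.comp_id, hess]
        refine Submodule.mem_inf.mpr ⟨?_, ?_⟩
        · exact sub_mem (Finsupp.single_mem_supported ℤ 1 hφ)
            (Finsupp.single_mem_supported ℤ 1 hιQ)
        · rw [LinearMap.mem_ker, map_sub]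
          simp [Finsupp.linearCombination_single]
    obtain ⟨σ, hσ, hmem⟩ := hstep
    refine ⟨σ, hσ, ?_⟩
    -- Step B: `rF F Q ≤ span (genSet F Q)`.
    refine Submodule.span_le.mpr ?_ hmem
    rintro x ⟨R, hR, a, ha, b, hb, rfl⟩
    have hb' : b ∈ Submodule.span ℤ ((fun χ => Finsupp.single χ (1 : ℤ)) '' F.Hom R Q) := by
      rw [← Finsupp.supported_eq_span_single]
      exact hb
    rw [dcomp_eq_lcompL]
    have hmapb := Submodule.mem_map_of_mem (f := lcompL a) hb'
    rw [Submodule.map_span] at hmapb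
    refine Submodule.span_le.mpr ?_ hmapb
    rintro y ⟨_, ⟨χ, hχ, rfl⟩, rfl⟩
    rw [← dcomp_eq_lcompL]
    have ha' := wF_le_span F R ha
    rw [dcomp_eq_rcompL]
    have hmapa := Submodule.mem_map_of_mem (f := rcompL (Finsupp.single χ 1)) ha'
    rw [Submodule.map_span] at hmapa
    refine Submodule.span_le.mpr ?_ hmapa
    rintro z ⟨_, ⟨ψ, hψ, rfl⟩, rfl⟩
    rw [← dcomp_eq_rcompL, dcomp_sub_left, dcomp_single_single, dcomp_single_single]
    by_cases hRtop : R = ⊤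
    · subst hRtop
      apply Submodule.subset_span
      refine ⟨⊤, ψ, χ, card_lt_of_lt hQ.lt_top, hψ, hχ, ?_⟩
      rw [gen_expr, inclP_top, MonoidHom.id_comp, MonoidHom.id_comp]
      simp only [one_mul, mul_one]
    · have hRlt : Nat.card ↥Q < Nat.card ↥R := hR.resolve_left hRtop
      have hkR : Nat.card P - Nat.card ↥R ≤ k := by
        have h1 : Nat.card ↥Q < Nat.card P := card_lt_top hQ
        have h2 : Nat.card ↥R ≤ Nat.card P := Subgroup.card_le_card_group R
        omega
      obtain ⟨σψ, hσψ, hψspan⟩ := IH R hRtop hkR ψ hψ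
      have h1 : dcomp (Finsupp.single ψ (1 : ℤ) -
          Finsupp.single ((inclP R).comp σψ) 1) (Finsupp.single χ 1) ∈
          Submodule.span ℤ (genSet F Q) := by
        rw [dcomp_eq_rcompL]
        have hm := Submodule.mem_map_of_mem (f := rcompL (Finsupp.single χ 1)) hψspan
        rw [Submodule.map_span] at hm
        refine Submodule.span_le.mpr ?_ hm
        rintro w ⟨_, ⟨U, τ, ν, hU, hτ, hν, rfl⟩, rfl⟩
        apply Submodule.subset_span
        refine ⟨U, τ, ν.comp χ, hRlt.trans hU, hτ, hF.comp_mem hν hχ, ?_⟩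
        rw [← dcomp_eq_rcompL, gen_expr, gen_expr, dcomp_sub_left,
          dcomp_single_single, dcomp_single_single, MonoidHom.comp_assoc,
          MonoidHom.comp_assoc, MonoidHom.comp_assoc]
        simp only [one_mul, mul_one]
      have h2 : dcomp (Finsupp.single (inclP R) (1 : ℤ))
          (dcomp (Finsupp.single σψ (1 : ℤ) - Finsupp.single (MonoidHom.id ↥R) 1)
            (Finsupp.single χ (1 : ℤ))) ∈ Submodule.span ℤ (genSet F Q) :=
        Submodule.subset_span ⟨R, σψ, χ, hRlt, hσψ, hχ, rfl⟩
      have hsum := Submodule.add_mem _ h1 h2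
      rw [SetLike.mem_coe]
      convert hsum using 1
      rw [dcomp_sub_left, dcomp_single_single, dcomp_single_single, gen_expr,
        MonoidHom.comp_assoc]
      simp only [one_mul, mul_one]
      abel

end Aux

/-- **3.4.2**: if `F` fulfills the Alperin condition then, for every proper subgroup `Q` of `P`
and every `φ ∈ F(P,Q)`, there is `σ ∈ F(Q)` such that `φ - ι_Q^P ∘ σ` decomposes as a sum of
dimorphisms `ι_{U_i}^P ∘ (τ_i - id_{U_i}) ∘ ν_i` with `|U_i| > |Q|`. -/
theorem alperin_dimorphism_decomposition
    (p : ℕ) [Fact p.Prime] {P : Type*} [Group P] [Finite P] (hP : IsPGroup p P)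
    (F : PCat P) (hF : F.IsDivisible) (hA : AlperinCond p F)
    (Q : Subgroup P) (hQ : Q ≠ ⊤)
    (φ : ↥Q →* ↥(⊤ : Subgroup P)) (hφ : φ ∈ F.Hom ⊤ Q) :
    ∃ σ ∈ F.Hom Q Q, ∃ (n : ℕ) (U : Fin n → Subgroup P)
      (τ : ∀ i, ↥(U i) →* ↥(U i)) (ν : ∀ i, ↥Q →* ↥(U i)),
      (∀ i, Nat.card ↥Q < Nat.card ↥(U i)) ∧
      (∀ i, τ i ∈ F.Hom (U i) (U i)) ∧
      (∀ i, ν i ∈ F.Hom (U i) Q) ∧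
      Finsupp.single φ (1 : ℤ) - Finsupp.single ((inclP Q).comp σ) 1 =
        ∑ i, dcomp (Finsupp.single (inclP (U i)) (1 : ℤ))
          (dcomp (Finsupp.single (τ i) (1 : ℤ) - Finsupp.single (MonoidHom.id ↥(U i)) 1)
            (Finsupp.single (ν i) (1 : ℤ))) := by
  obtain ⟨σ, hσ, hspan⟩ :=
    key_induction p F hF hA (Nat.card P - Nat.card ↥Q) Q hQ le_rfl φ hφ
  have hneg : ∀ x ∈ genSet F Q, -x ∈ genSet F Q := by
    rintro x ⟨U, τ, ν, hU, hτ, hν, rfl⟩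
    obtain ⟨τ', hτ', hl, _⟩ := hF.exists_inv hτ
    refine ⟨U, τ', τ.comp ν, hU, hτ', hF.comp_mem hτ hν, ?_⟩
    have hcan : τ'.comp (τ.comp ν) = ν := by
      rw [← MonoidHom.comp_assoc, hl, MonoidHom.id_comp]
    rw [gen_expr, gen_expr, hcan, neg_sub]
  obtain ⟨n, f, hfS, hsum⟩ := sum_rep hneg hspan
  choose U τ ν hU hτ hν hfe using hfS
  exact ⟨σ, hσ, n, U, τ, ν, hU, hτ, hν, by
    rw [hsum]; exact Finset.sum_congr rfl fun i _ => hfe i⟩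

end Puig
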